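/- Let K₁ and K₂ be isotropic subspaces of (E, B) with dim K₁ = dim K₂. Then K₁ ∩ K₂^⊥ ⊆ K₂ if and only if K₂ ∩ K₁^⊥ ⊆ K₁; and when these equivalent conditions hold, one has the equalities K₁ ∩ K₂^⊥ = K₁ ∩ K₂ = K₁^⊥ ∩ K₂. -/

import Mathlib

/-- The orthogonal complement `K^⊥` of a subspace `K` with respect to `B`. -/
noncomputable def orthB {E : Type*} [AddCommGroup E] [Module ℝ E]
    (B : LinearMap.BilinForm ℝ E) (K : Submodule ℝ E) : Submodule ℝ E :=
  LinearMap.BilinForm.orthogonal B K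

/-- For isotropic `K₁, K₂` of equal dimension: `K₁ ∩ K₂^⊥ ⊆ K₂ ↔ K₂ ∩ K₁^⊥ ⊆ K₁`, and when
these hold, `K₁ ∩ K₂^⊥ = K₁ ∩ K₂ = K₁^⊥ ∩ K₂`. -/
theorem stmt7 (E : Type*) [AddCommGroup E] [Module ℝ E] [FiniteDimensional ℝ E]
    (B : LinearMap.BilinForm ℝ E)
    (hBsymm : ∀ e e', B e e' = B e' e)
    (hBnd : LinearMap.BilinForm.Nondegenerate B)
    (K₁ K₂ : Submodule ℝ E)
    (hK₁ : K₁ ≤ orthB B K₁) (hK₂ : K₂ ≤ orthB B K₂)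
    (hdim : Module.finrank ℝ K₁ = Module.finrank ℝ K₂) :
    (K₁ ⊓ orthB B K₂ ≤ K₂ ↔ K₂ ⊓ orthB B K₁ ≤ K₁) ∧
    (K₁ ⊓ orthB B K₂ ≤ K₂ →
      K₁ ⊓ orthB B K₂ = K₁ ⊓ K₂ ∧ orthB B K₁ ⊓ K₂ = K₁ ⊓ K₂) := by
  have hRefl : B.IsRefl := fun x y h => by rw [hBsymm]; exact h
  set n := Module.finrank ℝ E with hn
  have horth : ∀ W : Submodule ℝ E,
      Module.finrank ℝ (orthB B W) = n - Module.finrank ℝ W := fun W =>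
    LinearMap.BilinForm.finrank_orthogonal hBnd W
  have hoo : ∀ W : Submodule ℝ E, orthB B (orthB B W) = W := fun W =>
    LinearMap.BilinForm.orthogonal_orthogonal hBnd hRefl W
  have hsup : ∀ U V : Submodule ℝ E, orthB B (U ⊔ V) = orthB B U ⊓ orthB B V := by
    intro U V
    apply le_antisymm
    · exact le_inf (LinearMap.BilinForm.orthogonal_le le_sup_left)
        (LinearMap.BilinForm.orthogonal_le le_sup_right)
    · intro e he
      intro x hx
      obtain ⟨u, hu, v, hv, rfl⟩ := Submodule.mem_sup.mp hx
      have h1 : B u e = 0 := he.1 u hu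
      have h2 : B v e = 0 := he.2 v hv
      show B (u + v) e = 0
      rw [map_add, LinearMap.add_apply, h1, h2, add_zero]
  have hinf : ∀ U V : Submodule ℝ E, orthB B (U ⊓ V) = orthB B U ⊔ orthB B V := by
    intro U V
    have := hsup (orthB B U) (orthB B V)
    rw [hoo, hoo] at this
    rw [← this, hoo]
  -- key dimension equality
  have key : Module.finrank ℝ (K₁ ⊓ orthB B K₂ : Submodule ℝ E)
      = Module.finrank ℝ (orthB B K₁ ⊓ K₂ : Submodule ℝ E) := by
    have h1 := horth (K₁ ⊓ orthB B K₂)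
    rw [hinf, hoo] at h1
    have h2 := Submodule.finrank_sup_add_finrank_inf_eq (orthB B K₁) K₂
    have h3 := horth K₁
    have h4 : Module.finrank ℝ (K₁ ⊓ orthB B K₂ : Submodule ℝ E)
        ≤ Module.finrank ℝ K₁ := Submodule.finrank_mono inf_le_left
    have h5 : Module.finrank ℝ K₁ ≤ n := Submodule.finrank_le K₁
    have h6 : Module.finrank ℝ (orthB B K₁ ⊔ K₂ : Submodule ℝ E) ≤ n :=
      Submodule.finrank_le _
    omega
  have e1 : K₁ ⊓ K₂ ≤ K₁ ⊓ orthB B K₂ := inf_le_inf_left K₁ hK₂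
  have e2 : K₁ ⊓ K₂ ≤ orthB B K₁ ⊓ K₂ := inf_le_inf_right K₂ hK₁
  have c1 : (K₁ ⊓ orthB B K₂ ≤ K₂) ↔ K₁ ⊓ orthB B K₂ = K₁ ⊓ K₂ :=
    ⟨fun h => le_antisymm (le_inf inf_le_left h) e1, fun h => h ▸ inf_le_right⟩
  have c2 : (K₂ ⊓ orthB B K₁ ≤ K₁) ↔ orthB B K₁ ⊓ K₂ = K₁ ⊓ K₂ := by
    rw [inf_comm K₂]
    exact ⟨fun h => le_antisymm (le_inf h inf_le_right) e2,
      fun h => h ▸ inf_le_left⟩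
  have main : K₁ ⊓ orthB B K₂ = K₁ ⊓ K₂ ↔ orthB B K₁ ⊓ K₂ = K₁ ⊓ K₂ := by
    constructor
    · intro h
      refine (Submodule.eq_of_le_of_finrank_le e2 ?_).symm
      rw [← key, h]
    · intro h
      refine (Submodule.eq_of_le_of_finrank_le e1 ?_).symm
      rw [key, h]
  refine ⟨c1.trans (main.trans c2.symm), fun h => ?_⟩
  have h1 := c1.mp h
  exact ⟨h1, main.mp h1⟩
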